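/- arXiv:2009.02468 — 5 statements merged into one kernel-verified Lean document; each statement's English description precedes it below -/
import Mathlib

section
/- Let T be a positive integer and δ ∈ [-π, π]. Then |δ| ≤ π/T if and only if for every integer k, Re(e^{iδ} · e^{i(πk/T + π/2)}) · Re(e^{i(πk/T + π/2)}) ≥ 0. -/
open Real Complex

theorem stmt_0 (T : ℕ) (hT : 0 < T) (δ : ℝ) (hδ : δ ∈ Set.Icc (-π) π) :
    |δ| ≤ π / T ↔
      ∀ k : ℤ,
        (Complex.exp (δ * Complex.I) *
            Complex.exp ((π * k / T + π / 2) * Complex.I)).re *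
          (Complex.exp ((π * k / T + π / 2) * Complex.I)).re ≥ 0 := by
  have hT0 : (T:ℝ) ≠ 0 := Nat.cast_ne_zero.mpr hT.ne'
  have hTpos : (0:ℝ) < T := Nat.cast_pos.mpr hT
  have hre : ∀ k : ℤ,
      (Complex.exp (δ * Complex.I) *
            Complex.exp ((π * k / T + π / 2) * Complex.I)).re *
          (Complex.exp ((π * k / T + π / 2) * Complex.I)).re
        = Real.sin (δ + π * k / T) * Real.sin (π * k / T) := by
    intro k
    rw [← Complex.exp_add, ← add_mul]
    have h1 : ((δ:ℂ) + ((π:ℂ) * k / T + π / 2)) = (((δ + π * k / T) + π/2 : ℝ) : ℂ) := by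
      push_cast; ring
    have h2 : ((π:ℂ) * k / T + π / 2) = (((π * k / T) + π/2 : ℝ) : ℂ) := by
      push_cast; ring
    rw [h1, h2, Complex.exp_ofReal_mul_I_re, Complex.exp_ofReal_mul_I_re,
      Real.cos_add_pi_div_two, Real.cos_add_pi_div_two]
    ring
  simp only [hre]
  constructor
  · intro h k
    have hdl : -(π/T) ≤ δ := (abs_le.mp h).1
    have hdu : δ ≤ π/T := (abs_le.mp h).2
    set r : ℤ := k % (T:ℤ) with hrdef
    set q : ℤ := k / (T:ℤ) with hqdef
    have hr0 : 0 ≤ r := Int.emod_nonneg k (by exact_mod_cast hT.ne')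
    have hrT : r < T := Int.emod_lt_of_pos k (by exact_mod_cast hT)
    have hk : (k:ℝ) = (T:ℝ) * q + r := by exact_mod_cast (Int.mul_ediv_add_emod k (T:ℤ)).symm
    have e1 : π * k / T = (π * r / T) + q * π := by
      rw [hk]; field_simp; ring
    rw [e1, show δ + (π * r / T + q * π) = (δ + π * r / T) + q * π by ring,
      Real.sin_add_int_mul_pi, Real.sin_add_int_mul_pi]
    have hsq : ((-1:ℝ))^q * ((-1:ℝ))^q = 1 := by
      rw [← zpow_add₀ (by norm_num : (-1:ℝ) ≠ 0), show q + q = 2*q by ring, zpow_mul]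
      norm_num
    have key : ((-1:ℝ))^q * Real.sin (δ + π * r / T) * ((-1:ℝ)^q * Real.sin (π * r / T))
        = Real.sin (δ + π * r / T) * Real.sin (π * r / T) := by
      rw [show ((-1:ℝ))^q * Real.sin (δ + π * r / T) * ((-1:ℝ)^q * Real.sin (π * r / T))
        = ((-1:ℝ)^q * (-1:ℝ)^q) * (Real.sin (δ + π * r / T) * Real.sin (π * r / T)) by ring,
        hsq, one_mul]
    rw [ge_iff_le, key]
    rcases eq_or_lt_of_le hr0 with h0 | h1
    · rw [← h0]
      simp
    · have hr1R : (1:ℝ) ≤ r := by exact_mod_cast h1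
      have hrTR : (r:ℝ) + 1 ≤ T := by exact_mod_cast hrT
      have hrR0 : (0:ℝ) ≤ r := by linarith
      have hfrac1 : π/T ≤ π * r / T := by
        rw [div_le_div_iff₀ hTpos hTpos]
        nlinarith [mul_pos Real.pi_pos hTpos]
      have hfrac2 : π * r / T + π / T ≤ π := by
        rw [← add_div, div_le_iff₀ hTpos]
        nlinarith [Real.pi_pos]
      apply mul_nonneg
      · apply Real.sin_nonneg_of_nonneg_of_le_pi
        · linarith
        · linarith
      · apply Real.sin_nonneg_of_nonneg_of_le_pi
        · positivity
        · have : 0 < π / T := by positivity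
          linarith
  · intro hcond
    by_contra hlt
    push_neg at hlt
    have hT1 : 1 < T := by
      by_contra hT1
      have hT1' : T = 1 := by omega
      rw [hT1'] at hlt
      simp at hlt
      have := abs_le.mpr ⟨hδ.1, hδ.2⟩
      linarith
    have hT2 : (2:ℝ) ≤ T := by exact_mod_cast hT1
    have hπT : 0 < π/T := by positivity
    have hπT2 : π/T < π := by
      rw [div_lt_iff₀ hTpos]
      nlinarith [Real.pi_pos]
    have hsinπT : 0 < Real.sin (π/T) := Real.sin_pos_of_pos_of_lt_pi hπT hπT2
    rcases abs_cases δ with ⟨habs, _⟩ | ⟨habs, _⟩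
    · have hδgt : π/T < δ := by rw [habs] at hlt; exact hlt
      have hc := hcond (-1)
      have e : π * ((-1:ℤ):ℝ) / T = -(π/T) := by push_cast; ring
      rw [e] at hc
      have hA : 0 < Real.sin (δ + -(π/T)) := by
        apply Real.sin_pos_of_pos_of_lt_pi
        · linarith
        · linarith [hδ.2]
      have hB : Real.sin (-(π/T)) < 0 := by
        rw [Real.sin_neg]; linarith
      nlinarith
    · have hδlt : δ < -(π/T) := by rw [habs] at hlt; linarith
      have hc := hcond 1
      have e : π * ((1:ℤ):ℝ) / T = π/T := by push_cast; ring
      rw [e] at hc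
      have hA : 0 < Real.sin (-(δ + π/T)) := by
        apply Real.sin_pos_of_pos_of_lt_pi
        · linarith
        · linarith [hδ.1]
      rw [Real.sin_neg] at hA
      nlinarith
end

section
/- Let T ≥ 2 and δ ∈ [-π, π]. Then |δ| ≤ π/T if and only if Re(e^{iδ} · e^{i(πk/T + π/2)}) ≤ 0 for all k ∈ {1, …, T−1}. -/
open Real Complex

theorem stmt_3 (T : ℕ) (hT : 2 ≤ T) (δ : ℝ) (hδ : δ ∈ Set.Icc (-π) π) :
    |δ| ≤ π / T ↔
      ∀ k : ℕ, 1 ≤ k → k ≤ T - 1 →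
        (Complex.exp (δ * Complex.I) *
            Complex.exp ((π * k / T + π / 2) * Complex.I)).re ≤ 0 := by
  obtain ⟨hδ1, hδ2⟩ := hδ
  have hT0 : (0:ℝ) < T := by positivity
  have hπT : 0 < π / T := div_pos Real.pi_pos hT0
  have key : ∀ k : ℕ, (Complex.exp (δ * Complex.I) *
      Complex.exp ((π * k / T + π / 2) * Complex.I)).re
      = - Real.sin (δ + π * k / T) := by
    intro k
    rw [← Complex.exp_add, ← add_mul]
    have : ((δ:ℂ) + ((π:ℂ) * k / T + (π:ℂ) / 2)) = ((δ + (π * k / T + π / 2) : ℝ) : ℂ) := by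
      push_cast; ring
    rw [this, Complex.exp_ofReal_mul_I_re, show δ + (π * k / T + π / 2)
      = (δ + π * k / T) + π / 2 by ring, Real.cos_add_pi_div_two]
  constructor
  · intro h k hk1 hk2
    rw [key, neg_nonpos]
    have habs := abs_le.mp h
    have hk2' : (k:ℝ) ≤ T - 1 := by
      have : (k:ℝ) ≤ ((T-1 : ℕ) : ℝ) := by exact_mod_cast hk2
      rwa [Nat.cast_sub (by omega), Nat.cast_one] at this
    have hk1' : (1:ℝ) ≤ k := by exact_mod_cast hk1
    apply Real.sin_nonneg_of_nonneg_of_le_pi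
    · have h1 : π * 1 / T ≤ π * k / T := by
        gcongr
      have : π * 1 / T = π / T := by ring
      linarith [habs.1]
    · have h2 : π * k / T ≤ π * (T - 1) / T := by
        gcongr
      have h3 : π * (T - 1) / T = π - π / T := by
        field_simp
      linarith [habs.2]
  · intro h
    have hs1 := h 1 le_rfl (by omega)
    have hs2 := h (T - 1) (by omega) le_rfl
    rw [key, neg_nonpos] at hs1 hs2
    have hcast : ((T - 1 : ℕ) : ℝ) = (T : ℝ) - 1 := by
      rw [Nat.cast_sub (by omega), Nat.cast_one]
    rw [hcast] at hs2
    have heq : π * ((T:ℝ) - 1) / T = π - π / T := by field_simp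
    rw [heq] at hs2
    rw [show π * (1:ℕ) / T = π / T by push_cast; ring] at hs1
    rw [abs_le]
    constructor
    · by_contra hlt
      push_neg at hlt
      have hx1 : -π < δ + π / T := by linarith
      have hx2 : δ + π / T < 0 := by linarith
      have := Real.sin_neg_of_neg_of_neg_pi_lt hx2 hx1
      linarith
    · by_contra hlt
      push_neg at hlt
      have hy1 : (0:ℝ) < δ - π / T := by linarith
      have hy2 : δ - π / T < π := by linarith
      have hpos := Real.sin_pos_of_pos_of_lt_pi hy1 hy2
      have : Real.sin (δ + (π - π / T)) = - Real.sin (δ - π / T) := by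
        rw [show δ + (π - π / T) = (δ - π / T) + π by ring, Real.sin_add_pi]
      linarith
end

section
/- Let ω ∈ ℝ, r > 0, δ ∈ ℝ, and define u_i = Re(e^{iωi}) and y_i = Re(−r e^{iδ} e^{iωi}) for integers i. Then for all integers i, l: (y_i − y_l)(u_i − u_l) = −4r sin²(ω(i−l)/2) · Re(e^{iδ} e^{i(ω(i+l)/2 + π/2)}) · Re(e^{i(ω(i+l)/2 + π/2)}). -/
open Real Complex

lemma re_exp_mul (x y : ℝ) :
    (Complex.exp ((x : ℝ) * Complex.I) * Complex.exp ((y : ℝ) * Complex.I)).re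
      = Real.cos (x + y) := by
  rw [← Complex.exp_add]
  have : (x : ℂ) * Complex.I + (y : ℂ) * Complex.I = ((x + y : ℝ) : ℂ) * Complex.I := by
    push_cast; ring
  rw [this, Complex.exp_ofReal_mul_I_re]

lemma re_neg_exp_mul (r x y : ℝ) :
    (-(r : ℂ) * Complex.exp ((x : ℝ) * Complex.I) * Complex.exp ((y : ℝ) * Complex.I)).re
      = -r * Real.cos (x + y) := by
  rw [mul_assoc, ← Complex.exp_add]
  have : (x : ℂ) * Complex.I + (y : ℂ) * Complex.I = ((x + y : ℝ) : ℂ) * Complex.I := by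
    push_cast; ring
  rw [this]
  simp only [Complex.mul_re, Complex.neg_re, Complex.neg_im, Complex.ofReal_re,
    Complex.ofReal_im, Complex.exp_ofReal_mul_I_re, Complex.exp_ofReal_mul_I_im]
  ring

lemma key_trig (r δ s d : ℝ) :
    (-r * Real.cos (δ + (s + d)) - -r * Real.cos (δ + (s - d))) *
      (Real.cos (s + d) - Real.cos (s - d))
      = -4 * r * (Real.sin d) ^ 2 * Real.cos (δ + (s + π / 2)) * Real.cos (s + π / 2) := by
  simp only [Real.cos_add, Real.sin_add, Real.cos_sub, Real.sin_sub,
    Real.cos_pi_div_two, Real.sin_pi_div_two]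
  ring

theorem stmt_10 (ω r δ : ℝ) (hr : 0 < r)
    (u y : ℤ → ℝ)
    (hu : ∀ i : ℤ, u i = (Complex.exp ((ω * i : ℝ) * Complex.I)).re)
    (hy : ∀ i : ℤ, y i = (-(r : ℂ) * Complex.exp ((δ : ℝ) * Complex.I) *
        Complex.exp ((ω * i : ℝ) * Complex.I)).re) :
    ∀ i l : ℤ,
      (y i - y l) * (u i - u l)
        = -4 * r * (Real.sin (ω * (i - l) / 2)) ^ 2 *
            (Complex.exp ((δ : ℝ) * Complex.I) *
              Complex.exp ((ω * (i + l) / 2 + π / 2 : ℝ) * Complex.I)).re *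
            (Complex.exp ((ω * (i + l) / 2 + π / 2 : ℝ) * Complex.I)).re := by
  intro i l
  simp only [hu, hy, re_exp_mul, re_neg_exp_mul, Complex.exp_ofReal_mul_I_re]
  have hi : ω * (i : ℝ) = (ω * (i + l) / 2) + (ω * (i - l) / 2) := by push_cast; ring
  have hl : ω * (l : ℝ) = (ω * (i + l) / 2) - (ω * (i - l) / 2) := by push_cast; ring
  rw [hi, hl]
  exact key_trig r δ (ω * ((i : ℝ) + l) / 2) (ω * ((i : ℝ) - l) / 2)
end

section
/- Let α, β be coprime positive integers with α < β, α odd, set ω = απ/β and T = 2β. Let G ∈ ℂ satisfy G = −r e^{iδ} with r > 0 and |δ| ≤ π/T. Define u_i = Re(e^{iωi}) and y_i = Re(G e^{iωi}) for i = 0, …, T−1. Then (y_i − y_l)(u_i − u_l) ≤ 0 for all i, l ∈ {0, …, T−1}. -/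
open Real Complex

lemma key_sin_lemma (T : ℕ) (hT : 0 < T) (δ : ℝ) (hδ : |δ| ≤ π / T) (k : ℕ) :
    0 ≤ Real.sin (k * π / T) * Real.sin (k * π / T + δ) := by
  obtain ⟨hd1, hd2⟩ := abs_le.mp hδ
  have hTpos : (0:ℝ) < T := by exact_mod_cast hT
  obtain ⟨q, s, hs, hk⟩ : ∃ q s, s < T ∧ k = q * T + s :=
    ⟨k / T, k % T, Nat.mod_lt _ hT, by rw [mul_comm]; exact (Nat.div_add_mod _ _).symm⟩
  have h1 : (k:ℝ) * π / T = s * π / T + q * π := by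
    subst hk; push_cast; field_simp; ring
  rw [h1]
  by_cases hs0 : s = 0
  · have h0 : (0:ℝ) * π / T + (q:ℝ) * π = (q:ℤ) * π := by push_cast; ring
    subst hs0
    push_cast
    rw [h0, Real.sin_int_mul_pi, zero_mul]
  · have hsin1 : Real.sin ((s:ℝ) * π / T + q * π) = (-1)^q * Real.sin ((s:ℝ) * π / T) := by
      have := Real.sin_add_int_mul_pi ((s:ℝ) * π / T) (q:ℤ)
      push_cast at this ⊢
      exact this
    have hsin2 : Real.sin ((s:ℝ) * π / T + q * π + δ) = (-1)^q * Real.sin ((s:ℝ) * π / T + δ) := by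
      have := Real.sin_add_int_mul_pi ((s:ℝ) * π / T + δ) (q:ℤ)
      push_cast at this ⊢
      rw [show (s:ℝ) * π / T + q * π + δ = (s:ℝ) * π / T + δ + q * π by ring]
      exact this
    rw [hsin1, hsin2]
    have hsq : ((-1:ℝ)^q) * ((-1:ℝ)^q) = 1 := by
      rw [← pow_add]; exact Even.neg_one_pow ⟨q, rfl⟩
    have hs1 : 1 ≤ s := Nat.one_le_iff_ne_zero.mpr hs0
    have hs1' : (1:ℝ) ≤ s := by exact_mod_cast hs1
    have hsT : (s:ℝ) + 1 ≤ T := by exact_mod_cast hs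
    have hsa : 0 ≤ Real.sin ((s:ℝ) * π / T) := by
      apply Real.sin_nonneg_of_nonneg_of_le_pi
      · positivity
      · rw [div_le_iff₀ hTpos]
        nlinarith [Real.pi_pos]
    have hsb : 0 ≤ Real.sin ((s:ℝ) * π / T + δ) := by
      apply Real.sin_nonneg_of_nonneg_of_le_pi
      · have h2 : π / T ≤ (s:ℝ) * π / T := by
          rw [div_le_div_iff₀ hTpos hTpos]
          have h := mul_le_mul_of_nonneg_right (mul_le_mul_of_nonneg_right hs1' Real.pi_pos.le) hTpos.le
          linarith [h]
        linarith
      · have h3 : ((s:ℝ) + 1) * π / T ≤ π := by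
          rw [div_le_iff₀ hTpos]
          nlinarith [Real.pi_pos]
        have h4 : ((s:ℝ) + 1) * π / T = (s:ℝ) * π / T + π / T := by ring
        linarith
    have heq : ((-1:ℝ)^q * Real.sin ((s:ℝ) * π / T)) * ((-1:ℝ)^q * Real.sin ((s:ℝ) * π / T + δ))
        = ((-1:ℝ)^q * (-1:ℝ)^q) * (Real.sin ((s:ℝ) * π / T) * Real.sin ((s:ℝ) * π / T + δ)) := by ring
    rw [heq, hsq, one_mul]
    exact mul_nonneg hsa hsb

theorem stmt_11 (α β : ℕ) (hcop : Nat.Coprime α β) (hα : 0 < α) (hαβ : α < β)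
    (hodd : Odd α) (r δ : ℝ) (hr : 0 < r)
    (ω : ℝ) (hω : ω = α * π / β) (T : ℕ) (hT : T = 2 * β)
    (hδ : |δ| ≤ π / T)
    (G : ℂ) (hG : G = -(r : ℂ) * Complex.exp ((δ : ℝ) * Complex.I))
    (u y : ℕ → ℝ)
    (hu : ∀ i, u i = (Complex.exp ((ω * i : ℝ) * Complex.I)).re)
    (hy : ∀ i, y i = (G * Complex.exp ((ω * i : ℝ) * Complex.I)).re) :
    ∀ i l, i < T → l < T → (y i - y l) * (u i - u l) ≤ 0 := by
  intro i l hi hl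
  have hβpos : 0 < β := lt_of_le_of_lt (Nat.zero_le α) hαβ
  have hβ : (0:ℝ) < β := by exact_mod_cast hβpos
  have hTpos : 0 < T := by omega
  have hu' : ∀ j : ℕ, u j = Real.cos (ω * j) := by
    intro j; rw [hu, Complex.exp_ofReal_mul_I_re]
  have hy' : ∀ j : ℕ, y j = -(r * Real.cos (ω * j + δ)) := by
    intro j
    rw [hy, hG, mul_assoc, ← Complex.exp_add]
    have : (δ:ℂ) * Complex.I + (ω * j : ℝ) * Complex.I = ((ω * j + δ : ℝ) : ℂ) * Complex.I := by
      push_cast; ring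
    rw [this, neg_mul, Complex.neg_re, Complex.re_ofReal_mul, Complex.exp_ofReal_mul_I_re]
  rw [hu' i, hu' l, hy' i, hy' l]
  -- the midpoint angle
  set θ : ℝ := ((α * (i + l) : ℕ) : ℝ) * π / T with hθdef
  have hθ : (ω * i + ω * l) / 2 = θ := by
    rw [hθdef, hω, hT]
    push_cast
    field_simp
  have key : 0 ≤ Real.sin θ * Real.sin (θ + δ) := key_sin_lemma T hTpos δ hδ _
  have e1 : Real.cos (ω * i + δ) - Real.cos (ω * l + δ)
      = -2 * Real.sin (θ + δ) * Real.sin ((ω * i - ω * l) / 2) := by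
    rw [Real.cos_sub_cos]
    rw [show (ω * i + δ + (ω * l + δ)) / 2 = (ω * i + ω * l) / 2 + δ by ring, hθ]
    rw [show (ω * i + δ - (ω * l + δ)) / 2 = (ω * i - ω * l) / 2 by ring]
  have e2 : Real.cos (ω * i) - Real.cos (ω * l)
      = -2 * Real.sin θ * Real.sin ((ω * i - ω * l) / 2) := by
    rw [Real.cos_sub_cos, hθ]
  have expand : (-(r * Real.cos (ω * i + δ)) - -(r * Real.cos (ω * l + δ)))
      * (Real.cos (ω * i) - Real.cos (ω * l))
      = -(4 * r * (Real.sin θ * Real.sin (θ + δ)) * Real.sin ((ω * i - ω * l) / 2) ^ 2) := by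
    have : (-(r * Real.cos (ω * i + δ)) - -(r * Real.cos (ω * l + δ)))
        * (Real.cos (ω * i) - Real.cos (ω * l))
        = -r * ((Real.cos (ω * i + δ) - Real.cos (ω * l + δ))
          * (Real.cos (ω * i) - Real.cos (ω * l))) := by ring
    rw [this, e1, e2]; ring
  rw [expand]
  have hsq : (0:ℝ) ≤ Real.sin ((ω * i - ω * l) / 2) ^ 2 := sq_nonneg _
  have : 0 ≤ 4 * r * (Real.sin θ * Real.sin (θ + δ)) * Real.sin ((ω * i - ω * l) / 2) ^ 2 :=
    mul_nonneg (mul_nonneg (by linarith : (0:ℝ) ≤ 4 * r) key) hsq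
  linarith
end

section
/- Let α, β be coprime positive integers with α < β, α even, set ω = απ/β and T = β. Let G = −r e^{iδ} with r > 0 and |δ| ≤ π/T. Define u_i = Re(e^{iωi}) and y_i = Re(G e^{iωi}) for i = 0, …, T−1. Then (y_i − y_l)(u_i − u_l) ≤ 0 for all i, l ∈ {0, …, T−1}. -/
open Real Complex

lemma key_sin (T : ℕ) (hT : 0 < T) (m : ℕ) (δ : ℝ) (hδ : |δ| ≤ π / T) :
    0 ≤ Real.sin (m * π / T) * Real.sin (m * π / T + δ) := by
  have hπ : (0:ℝ) < π := Real.pi_pos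
  have hTR : (0:ℝ) < (T:ℝ) := by exact_mod_cast hT
  set t := π / (T:ℝ) with ht
  have htpos : 0 < t := by positivity
  have hTt : (T:ℝ) * t = π := by rw [ht]; field_simp
  have hδ1 : -t ≤ δ := neg_le_of_abs_le hδ
  have hδ2 : δ ≤ t := le_of_abs_le hδ
  set j := m % (2 * T) with hj
  have hjlt : j < 2 * T := Nat.mod_lt _ (by omega)
  obtain ⟨k, hk⟩ : ∃ k, m = 2 * T * k + j := ⟨m / (2 * T), (Nat.div_add_mod m (2*T)).symm ▸ by omega⟩
  have hrw : (m : ℝ) * π / T = (j:ℝ) * t + (k : ℤ) * (2 * π) := by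
    have hm : (m : ℝ) = 2 * T * k + j := by exact_mod_cast congrArg (Nat.cast : ℕ → ℝ) hk
    rw [hm, ht]; push_cast; field_simp; ring
  have hsin1 : Real.sin ((m:ℝ) * π / T) = Real.sin ((j:ℝ) * t) := by
    rw [hrw, Real.sin_add_int_mul_two_pi]
  have hsin2 : Real.sin ((m:ℝ) * π / T + δ) = Real.sin ((j:ℝ) * t + δ) := by
    have : (m : ℝ) * π / T + δ = ((j:ℝ) * t + δ) + (k : ℤ) * (2 * π) := by
      rw [hrw]; ring
    rw [this, Real.sin_add_int_mul_two_pi]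
  rw [hsin1, hsin2]
  rcases lt_trichotomy j T with hjT | hjT | hjT
  · rcases Nat.eq_zero_or_pos j with h0 | h0
    · simp [h0]
    · have hj1 : (1:ℝ) ≤ (j:ℝ) := by exact_mod_cast h0
      have hjle : (j:ℝ) ≤ (T:ℝ) - 1 := by
        have : (j:ℝ) + 1 ≤ T := by exact_mod_cast hjT
        linarith
      have hub : (j:ℝ) * t ≤ π - t := by nlinarith
      have hlb : t ≤ (j:ℝ) * t := by nlinarith
      exact mul_nonneg
        (Real.sin_nonneg_of_nonneg_of_le_pi (by nlinarith) (by nlinarith))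
        (Real.sin_nonneg_of_nonneg_of_le_pi (by linarith) (by linarith))
  · have : (j:ℝ) * t = π := by rw [hjT]; exact hTt
    simp [this]
  · have hj1 : (T:ℝ) + 1 ≤ (j:ℝ) := by exact_mod_cast hjT
    have hjle : (j:ℝ) ≤ 2 * (T:ℝ) - 1 := by
      have : (j:ℝ) + 1 ≤ 2 * T := by exact_mod_cast hjlt
      linarith
    have e1 : Real.sin ((j:ℝ) * t) = Real.sin ((j:ℝ) * t - 2 * π) :=
      (Real.sin_sub_two_pi _).symm
    have e2 : Real.sin ((j:ℝ) * t + δ) = Real.sin (((j:ℝ) * t + δ) - 2 * π) :=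
      (Real.sin_sub_two_pi _).symm
    rw [e1, e2]
    have hub : (j:ℝ) * t ≤ 2 * π - t := by nlinarith
    have hlb : π + t ≤ (j:ℝ) * t := by nlinarith
    have s1 : Real.sin ((j:ℝ) * t - 2 * π) ≤ 0 :=
      Real.sin_nonpos_of_nonpos_of_neg_pi_le (by linarith) (by linarith)
    have s2 : Real.sin (((j:ℝ) * t + δ) - 2 * π) ≤ 0 :=
      Real.sin_nonpos_of_nonpos_of_neg_pi_le (by linarith) (by linarith)
    nlinarith [mul_nonneg (neg_nonneg.2 s1) (neg_nonneg.2 s2)]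

theorem stmt_12 (α β : ℕ) (hcop : Nat.Coprime α β) (hα : 0 < α) (hαβ : α < β)
    (heven : Even α) (r δ : ℝ) (hr : 0 < r)
    (ω : ℝ) (hω : ω = α * π / β) (T : ℕ) (hT : T = β)
    (hδ : |δ| ≤ π / T)
    (G : ℂ) (hG : G = -(r : ℂ) * Complex.exp ((δ : ℝ) * Complex.I))
    (u y : ℕ → ℝ)
    (hu : ∀ i, u i = (Complex.exp ((ω * i : ℝ) * Complex.I)).re)
    (hy : ∀ i, y i = (G * Complex.exp ((ω * i : ℝ) * Complex.I)).re) :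
    ∀ i l, i < T → l < T → (y i - y l) * (u i - u l) ≤ 0 := by
  obtain ⟨a, ha⟩ := heven
  have hβ : 0 < β := lt_trans hα hαβ
  have hTpos : 0 < T := hT ▸ hβ
  have hu' : ∀ i : ℕ, u i = Real.cos (ω * i) := by
    intro i; rw [hu]; exact Complex.exp_ofReal_mul_I_re _
  have hy' : ∀ i : ℕ, y i = -(r * Real.cos (ω * i + δ)) := by
    intro i
    rw [hy, hG, mul_assoc, ← Complex.exp_add]
    have : (δ : ℂ) * Complex.I + (ω * i : ℝ) * Complex.I = ((ω * i + δ : ℝ)) * Complex.I := by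
      push_cast; ring
    rw [this, neg_mul, Complex.neg_re, Complex.re_ofReal_mul, Complex.exp_ofReal_mul_I_re]
  intro i l _ _
  set A := ω * i with hA
  set B := ω * l with hB
  have hkey : 0 ≤ Real.sin ((A + B)/2) * Real.sin ((A + B)/2 + δ) := by
    have hs : (A + B)/2 = ((a * (i + l) : ℕ) : ℝ) * π / T := by
      rw [hA, hB, hω, hT, ha]
      push_cast
      field_simp
      ring
    rw [hs]
    exact key_sin T hTpos _ δ hδ
  have h1 := Real.cos_sub_cos (B + δ) (A + δ)
  have h2 := Real.cos_sub_cos A B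
  have e1 : (B + δ + (A + δ)) / 2 = (A + B)/2 + δ := by ring
  have e2 : (B + δ - (A + δ)) / 2 = -((A - B)/2) := by ring
  rw [e1, e2, Real.sin_neg] at h1
  rw [hy', hy', hu', hu', ← hA, ← hB]
  have heq : (-(r * Real.cos (A + δ)) - -(r * Real.cos (B + δ))) * (Real.cos A - Real.cos B)
      = -(4 * r * (Real.sin ((A + B)/2) * Real.sin ((A + B)/2 + δ)) * (Real.sin ((A - B)/2))^2) := by
    linear_combination (r * (Real.cos A - Real.cos B)) * h1
      + (r * 2 * Real.sin ((A+B)/2 + δ) * Real.sin ((A-B)/2)) * h2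
  rw [heq]
  have : 0 ≤ 4 * r * (Real.sin ((A + B)/2) * Real.sin ((A + B)/2 + δ)) * (Real.sin ((A - B)/2))^2 := by
    have h4r : 0 ≤ 4 * r := by linarith
    exact mul_nonneg (mul_nonneg h4r hkey) (sq_nonneg _)
  linarith
end
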